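/- Let n = 2^m - 1 with m ≥ 3 and let C be the [2^m-1, 2^m-1-m] binary Hamming code (with columns of the parity check matrix being the binary representations of 1,…,2^m-1). Then the number of codewords of C lying in the 2-charge constrained set S₂ equals 2^{⌊(2^m-1)/2⌋ - 1}. -/

import Mathlib

open Finset

def inS2 {n : ℕ} (x : Fin n → ZMod 2) : Prop :=
  ∀ r : ℕ, 1 ≤ r → r ≤ n →
    0 ≤ (∑ i : Fin n, if (i : ℕ) < r then (if x i = 0 then (1 : ℤ) else -1) else 0) ∧
    (∑ i : Fin n, if (i : ℕ) < r then (if x i = 0 then (1 : ℤ) else -1) else 0) ≤ 2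

/- ## ZMod 2 helpers -/

lemma zmod2_cases : ∀ a : ZMod 2, a = 0 ∨ a = 1 := by decide
lemma zmod2_add_self : ∀ a : ZMod 2, a + a = 0 := by decide
lemma zmod2_eq_of_add : ∀ a c : ZMod 2, a + c = 0 → a = c := by decide
lemma zmod2_pair1 : ∀ a c : ZMod 2, a + c = 1 → c = a + 1 := by decide
lemma zmod2_a_a1 : ∀ a : ZMod 2, a + (a + 1) = 1 := by decide

/- ## Partial sums -/

def hstep (a : ZMod 2) : ℤ := if a = 0 then 1 else -1

def hpsum {n : ℕ} (x : Fin n → ZMod 2) (r : ℕ) : ℤ :=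
  ∑ i : Fin n, if (i : ℕ) < r then hstep (x i) else 0

lemma inS2_iff {n : ℕ} (x : Fin n → ZMod 2) :
    inS2 x ↔ ∀ r : ℕ, 1 ≤ r → r ≤ n → 0 ≤ hpsum x r ∧ hpsum x r ≤ 2 := Iff.rfl

lemma hstep_pm (a : ZMod 2) : hstep a = 1 ∨ hstep a = -1 := by
  unfold hstep; split <;> simp

lemma hstep_eq_one_iff (a : ZMod 2) : hstep a = 1 ↔ a = 0 := by
  unfold hstep; split <;> simp_all

lemma zmod2_pair_step (a b : ZMod 2) (h : a + b = 1) : hstep a + hstep b = 0 := by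
  revert h; unfold hstep
  rcases zmod2_cases a with ha | ha <;> rcases zmod2_cases b with hb | hb <;>
    subst ha <;> subst hb <;> decide

lemma zmod2_pair_of_step (a b : ZMod 2) (h : hstep a + hstep b = 0) : a + b = 1 := by
  revert h; unfold hstep
  rcases zmod2_cases a with ha | ha <;> rcases zmod2_cases b with hb | hb <;>
    subst ha <;> subst hb <;> decide

lemma hpsum_zero {n : ℕ} (x : Fin n → ZMod 2) : hpsum x 0 = 0 := by
  simp [hpsum]

lemma hpsum_succ {n : ℕ} (x : Fin n → ZMod 2) (r : ℕ) (h : r < n) :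
    hpsum x (r + 1) = hpsum x r + hstep (x ⟨r, h⟩) := by
  unfold hpsum
  have key : ∀ i : Fin n, (if (i : ℕ) < r + 1 then hstep (x i) else 0)
      = (if (i : ℕ) < r then hstep (x i) else 0) + (if i = ⟨r, h⟩ then hstep (x i) else 0) := by
    intro i
    rcases lt_trichotomy (i : ℕ) r with h1 | h1 | h1
    · rw [if_pos (by omega), if_pos h1, if_neg (by simp [Fin.ext_iff]; omega)]; ring
    · rw [if_pos (by omega), if_neg (by omega), if_pos (by simp [Fin.ext_iff, h1])]; ring
    · rw [if_neg (by omega), if_neg (by omega), if_neg (by simp [Fin.ext_iff]; omega)]; ring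
  rw [Finset.sum_congr rfl (fun i _ => key i), Finset.sum_add_distrib,
    Finset.sum_ite_eq' Finset.univ (⟨r, h⟩ : Fin n) (fun i => hstep (x i))]
  simp

lemma hpsum_mod {n : ℕ} (x : Fin n → ZMod 2) : ∀ r, r ≤ n → hpsum x r % 2 = (r : ℤ) % 2 := by
  intro r
  induction r with
  | zero => intro _; simp [hpsum_zero]
  | succ r ih =>
      intro h
      rw [hpsum_succ x r (by omega)]
      have := ih (by omega)
      rcases hstep_pm (x ⟨r, by omega⟩) with h1 | h1 <;> rw [h1] <;> push_cast <;> omega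

def structP {n : ℕ} (x : Fin n → ZMod 2) : Prop :=
  (∀ h : 0 < n, x ⟨0, h⟩ = 0) ∧
    ∀ k, ∀ h : 2 * k + 2 < n, x ⟨2 * k + 1, by omega⟩ + x ⟨2 * k + 2, h⟩ = 1

lemma hpsum_odd_of_inS2 {n : ℕ} (x : Fin n → ZMod 2) (hx : inS2 x) :
    ∀ k, 2 * k + 1 ≤ n → hpsum x (2 * k + 1) = 1 := by
  intro k hk
  obtain ⟨h1, h2⟩ := (inS2_iff x).mp hx (2 * k + 1) (by omega) hk
  have := hpsum_mod x (2 * k + 1) hk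
  push_cast at this
  omega

lemma structP_of_inS2 {n : ℕ} (x : Fin n → ZMod 2) (hx : inS2 x) : structP x := by
  constructor
  · intro h
    have h1 : hpsum x 1 = 1 := hpsum_odd_of_inS2 x hx 0 (by omega)
    have h2 : hpsum x 1 = hpsum x 0 + hstep (x ⟨0, h⟩) := hpsum_succ x 0 h
    rw [hpsum_zero] at h2
    rw [← hstep_eq_one_iff]
    omega
  · intro k h
    have e1 : hpsum x (2 * k + 1) = 1 := hpsum_odd_of_inS2 x hx k (by omega)
    have e2 : hpsum x (2 * k + 3) = 1 := by
      have h3 := hpsum_odd_of_inS2 x hx (k + 1) (by omega)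
      rw [show 2 * (k + 1) + 1 = 2 * k + 3 by ring] at h3
      exact h3
    have s1 : hpsum x (2 * k + 2) = hpsum x (2 * k + 1) + hstep (x ⟨2 * k + 1, by omega⟩) :=
      hpsum_succ x (2 * k + 1) (by omega)
    have s2 : hpsum x (2 * k + 3) = hpsum x (2 * k + 2) + hstep (x ⟨2 * k + 2, h⟩) :=
      hpsum_succ x (2 * k + 2) h
    exact zmod2_pair_of_step _ _ (by omega)

lemma hpsum_odd_of_structP {n : ℕ} (x : Fin n → ZMod 2) (hx : structP x) :
    ∀ k, 2 * k + 1 ≤ n → hpsum x (2 * k + 1) = 1 := by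
  intro k
  induction k with
  | zero =>
      intro hk
      have h2 : hpsum x 1 = hpsum x 0 + hstep (x ⟨0, by omega⟩) := hpsum_succ x 0 (by omega)
      rw [hpsum_zero, zero_add] at h2
      have h3 : hstep (x ⟨0, by omega⟩) = 1 := (hstep_eq_one_iff _).mpr (hx.1 (by omega))
      rw [show 2 * 0 + 1 = 1 from rfl, h2, h3]
  | succ k ih =>
      intro hk
      have e0 : hpsum x (2 * k + 1) = 1 := ih (by omega)
      have hpair := hx.2 k (by omega)
      have hst := zmod2_pair_step _ _ hpair
      have s1 : hpsum x (2 * k + 2) = hpsum x (2 * k + 1) + hstep (x ⟨2 * k + 1, by omega⟩) :=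
        hpsum_succ x (2 * k + 1) (by omega)
      have s2 : hpsum x (2 * (k + 1) + 1) = hpsum x (2 * k + 2) + hstep (x ⟨2 * k + 2, by omega⟩) :=
        hpsum_succ x (2 * k + 2) (by omega)
      omega

lemma inS2_of_structP {n : ℕ} (x : Fin n → ZMod 2) (hx : structP x) : inS2 x := by
  rw [inS2_iff]
  intro r h1 h2
  rcases Nat.even_or_odd r with ⟨k, hk⟩ | ⟨k, hk⟩
  · obtain ⟨k', rfl⟩ : ∃ k', k = k' + 1 := ⟨k - 1, by omega⟩
    have hr : r = 2 * k' + 2 := by omega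
    subst hr
    have e1 : hpsum x (2 * k' + 1) = 1 := hpsum_odd_of_structP x hx k' (by omega)
    have s1 : hpsum x (2 * k' + 2) = hpsum x (2 * k' + 1) + hstep (x ⟨2 * k' + 1, by omega⟩) :=
      hpsum_succ x (2 * k' + 1) (by omega)
    rcases hstep_pm (x ⟨2 * k' + 1, by omega⟩) with h | h <;> constructor <;> omega
  · have hr : r = 2 * k + 1 := by omega
    subst hr
    have := hpsum_odd_of_structP x hx k (by omega)
    constructor <;> omega

/- ## The parametrization of S₂ -/

def hbb {p : ℕ} (b : Fin p → ZMod 2) (k : ℕ) : ZMod 2 :=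
  if h : k < p then b ⟨k, h⟩ else 0

lemma hbb_lt {p : ℕ} (b : Fin p → ZMod 2) (k : ℕ) (h : k < p) : hbb b k = b ⟨k, h⟩ :=
  dif_pos h

def hphi {p : ℕ} (b : Fin p → ZMod 2) (i : ℕ) : ZMod 2 :=
  if i = 0 then 0 else if i % 2 = 1 then hbb b ((i - 1) / 2) else hbb b ((i - 1) / 2) + 1

lemma hphi_zero {p : ℕ} (b : Fin p → ZMod 2) : hphi b 0 = 0 := rfl

lemma hphi_odd {p : ℕ} (b : Fin p → ZMod 2) (k : ℕ) : hphi b (2 * k + 1) = hbb b k := by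
  unfold hphi
  rw [if_neg (by omega), if_pos (by omega), show (2 * k + 1 - 1) / 2 = k by omega]

lemma hphi_even {p : ℕ} (b : Fin p → ZMod 2) (k : ℕ) : hphi b (2 * k + 2) = hbb b k + 1 := by
  unfold hphi
  rw [if_neg (by omega), if_neg (by omega), show (2 * k + 2 - 1) / 2 = k by omega]

lemma structP_hphi {n p : ℕ} (hn : n = 2 * p + 1) (b : Fin p → ZMod 2) :
    structP (fun i : Fin n => hphi b (i : ℕ)) := by
  constructor
  · intro h; exact hphi_zero b
  · intro k h
    simp only
    rw [hphi_odd, hphi_even]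
    exact zmod2_a_a1 (hbb b k)

lemma eq_hphi_of_structP {n p : ℕ} (hn : n = 2 * p + 1) (x : Fin n → ZMod 2)
    (hs : structP x) (i : ℕ) (h : i < n) :
    x ⟨i, h⟩ = hphi (fun k : Fin p => x ⟨2 * (k : ℕ) + 1, by omega⟩) i := by
  rcases Nat.even_or_odd i with ⟨k, hk⟩ | ⟨k, hk⟩
  · rcases Nat.eq_zero_or_pos k with hk0 | hk0
    · have hi : i = 0 := by omega
      subst hi
      rw [hphi_zero]
      exact hs.1 (by omega)
    · obtain ⟨k', rfl⟩ : ∃ k', k = k' + 1 := ⟨k - 1, by omega⟩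
      have hi : i = 2 * k' + 2 := by omega
      subst hi
      rw [hphi_even, hbb_lt _ k' (by omega)]
      have hpair := hs.2 k' (by omega)
      exact zmod2_pair1 _ _ hpair
  · have hi : i = 2 * k + 1 := by omega
    subst hi
    rw [hphi_odd, hbb_lt _ k (by omega)]

/- ## Bit-counting -/

lemma sum_testBit_even (s j : ℕ) (hs : 2 ≤ s) (hj : j < s) :
    ∑ t ∈ Finset.range (2 ^ s), (if Nat.testBit t j then (1 : ZMod 2) else 0) = 0 := by
  obtain ⟨s', rfl⟩ : ∃ s', s = s' + 1 := ⟨s - 1, by omega⟩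
  rw [show (2 : ℕ) ^ (s' + 1) = 2 ^ s' + 2 ^ s' by ring, Finset.sum_range_add]
  rcases Nat.lt_or_ge j s' with hj' | hj'
  · have hcong : ∀ u ∈ Finset.range (2 ^ s'),
        (if Nat.testBit (2 ^ s' + u) j then (1 : ZMod 2) else 0)
          = (if Nat.testBit u j then (1 : ZMod 2) else 0) := by
      intro u _
      rw [Nat.testBit_two_pow_add_gt hj']
    rw [Finset.sum_congr rfl hcong]
    exact zmod2_add_self _
  · have hj'' : j = s' := by omega
    subst hj''
    have e1 : ∀ t ∈ Finset.range (2 ^ j),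
        (if Nat.testBit t j then (1 : ZMod 2) else 0) = 0 := by
      intro t ht
      rw [Nat.testBit_lt_two_pow (Finset.mem_range.mp ht)]
      simp
    have e2 : ∀ u ∈ Finset.range (2 ^ j),
        (if Nat.testBit (2 ^ j + u) j then (1 : ZMod 2) else 0) = 1 := by
      intro u hu
      rw [Nat.testBit_two_pow_add_eq, Nat.testBit_lt_two_pow (Finset.mem_range.mp hu)]
      simp
    rw [Finset.sum_congr rfl e1, Finset.sum_congr rfl e2]
    simp only [Finset.sum_const, Finset.card_range, nsmul_eq_mul, mul_one, Finset.sum_const_zero,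
      zero_add]
    obtain ⟨s'', rfl⟩ : ∃ s'', j = s'' + 1 := ⟨j - 1, by omega⟩
    rw [Nat.cast_pow, pow_succ, show ((2 : ℕ) : ZMod 2) = 0 by decide, mul_zero]
    simp

/- ## Pair splitting of sums -/

lemma sum_pairs {M : Type*} [AddCommMonoid M] (f : ℕ → M) (p : ℕ) :
    ∑ i ∈ Finset.range (2 * p), f (1 + i) =
      ∑ k ∈ Finset.range p, (f (2 * k + 1) + f (2 * k + 2)) := by
  induction p with
  | zero => simp
  | succ q ih =>
      rw [show 2 * (q + 1) = 2 * q + 1 + 1 by ring, Finset.sum_range_succ, Finset.sum_range_succ,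
        ih, Finset.sum_range_succ, add_assoc]
      congr 2 <;> congr 1 <;> omega

/- ## The parity check computation -/

lemma check_hphi (m p : ℕ) (hm : 3 ≤ m) (hp : p = 2 ^ (m - 1) - 1)
    (b : Fin p → ZMod 2) (j : ℕ) (hj : j < m) :
    (∑ i : Fin (2 ^ m - 1), hphi b (i : ℕ) *
        (if Nat.testBit ((i : ℕ) + 1) j then (1 : ZMod 2) else 0))
      = if j = 0 then (∑ k, b k) + ((p : ℕ) : ZMod 2) else 0 := by
  have h2m : (2 : ℕ) ^ m = 2 * 2 ^ (m - 1) := by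
    conv_lhs => rw [show m = (m - 1) + 1 by omega]
    ring
  have hpow : (4 : ℕ) ≤ 2 ^ (m - 1) := by
    calc (4 : ℕ) = 2 ^ 2 := by norm_num
    _ ≤ 2 ^ (m - 1) := Nat.pow_le_pow_right (by norm_num) (by omega)
  have hn : 2 ^ m - 1 = 2 * p + 1 := by omega
  rw [Fin.sum_univ_eq_sum_range
    (fun i => hphi b i * (if Nat.testBit (i + 1) j then (1 : ZMod 2) else 0)) (2 ^ m - 1)]
  rw [hn, show 2 * p + 1 = 1 + 2 * p by ring, Finset.sum_range_add]
  rw [sum_pairs (fun i => hphi b i * (if Nat.testBit (i + 1) j then (1 : ZMod 2) else 0)) p]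
  have hfirst : ∑ i ∈ Finset.range 1,
      hphi b i * (if Nat.testBit (i + 1) j then (1 : ZMod 2) else 0) = 0 := by
    simp [hphi_zero]
  rw [hfirst, zero_add]
  rcases Nat.eq_zero_or_pos j with hj0 | hj0
  · subst hj0
    rw [if_pos rfl]
    have hterm : ∀ k ∈ Finset.range p,
        (hphi b (2 * k + 1) * (if Nat.testBit (2 * k + 1 + 1) 0 then (1 : ZMod 2) else 0)
          + hphi b (2 * k + 2) * (if Nat.testBit (2 * k + 2 + 1) 0 then (1 : ZMod 2) else 0))
        = hbb b k + 1 := by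
      intro k _
      have hf : Nat.testBit (2 * k + 1 + 1) 0 = false := by
        simp only [Nat.testBit_zero, decide_eq_false_iff_not]
        omega
      have ht : Nat.testBit (2 * k + 2 + 1) 0 = true := by
        simp only [Nat.testBit_zero, decide_eq_true_eq]
        omega
      rw [hphi_odd, hphi_even, hf, ht, if_neg Bool.false_ne_true, if_pos rfl]
      ring
    rw [Finset.sum_congr rfl hterm, Finset.sum_add_distrib]
    have e1 : ∑ k ∈ Finset.range p, hbb b k = ∑ k : Fin p, b k := by
      rw [← Fin.sum_univ_eq_sum_range (fun k => hbb b k) p]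
      apply Finset.sum_congr rfl
      intro k _
      rw [hbb_lt b (k : ℕ) k.isLt]
    rw [e1]
    congr 1
    simp
  · rw [if_neg (by omega)]
    obtain ⟨j', rfl⟩ : ∃ j', j = j' + 1 := ⟨j - 1, by omega⟩
    have hterm : ∀ k ∈ Finset.range p,
        (hphi b (2 * k + 1) * (if Nat.testBit (2 * k + 1 + 1) (j' + 1) then (1 : ZMod 2) else 0)
          + hphi b (2 * k + 2) * (if Nat.testBit (2 * k + 2 + 1) (j' + 1) then (1 : ZMod 2) else 0))
        = (if Nat.testBit (k + 1) j' then (1 : ZMod 2) else 0) := by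
      intro k _
      rw [Nat.testBit_add_one, Nat.testBit_add_one, show (2 * k + 1 + 1) / 2 = k + 1 by omega,
        show (2 * k + 2 + 1) / 2 = k + 1 by omega, hphi_odd, hphi_even]
      have hexp : hbb b k * (if Nat.testBit (k + 1) j' then (1 : ZMod 2) else 0)
          + (hbb b k + 1) * (if Nat.testBit (k + 1) j' then (1 : ZMod 2) else 0)
          = (hbb b k + hbb b k) * (if Nat.testBit (k + 1) j' then (1 : ZMod 2) else 0)
            + (if Nat.testBit (k + 1) j' then (1 : ZMod 2) else 0) := by ring
      rw [hexp, zmod2_add_self, zero_mul, zero_add]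
    rw [Finset.sum_congr rfl hterm]
    have hre : ∑ k ∈ Finset.range p, (if Nat.testBit (k + 1) j' then (1 : ZMod 2) else 0)
        = ∑ t ∈ Finset.range (p + 1), (if Nat.testBit t j' then (1 : ZMod 2) else 0) := by
      rw [Finset.sum_range_succ' (fun t => if Nat.testBit t j' then (1 : ZMod 2) else 0) p]
      simp
    rw [hre, show p + 1 = 2 ^ (m - 1) by omega]
    exact sum_testBit_even (m - 1) j' (by omega) (by omega)

/- ## Counting sum-constrained tuples -/

lemma count_sum_eq (q : ℕ) (c : ZMod 2) :
    (Finset.univ.filter (fun b : Fin (q + 1) → ZMod 2 => ∑ k, b k = c)).card = 2 ^ q := by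
  classical
  have hcardfun : Fintype.card (Fin q → ZMod 2) = 2 ^ q := by
    rw [Fintype.card_fun]
    simp [ZMod.card]
  rw [← hcardfun, ← Finset.card_univ]
  apply Finset.card_nbij' (fun b => Fin.init b) (fun a => Fin.snoc a (c - ∑ k, a k))
  · intro b _
    exact Finset.mem_univ _
  · intro a _
    simp only [Finset.mem_coe, Finset.mem_filter, Finset.mem_univ, true_and]
    rw [Fin.sum_univ_castSucc]
    simp only [Fin.snoc_castSucc, Fin.snoc_last]
    ring
  · intro b hb
    simp only [Finset.mem_coe, Finset.mem_filter, Finset.mem_univ, true_and] at hb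
    have h2 : c - ∑ k : Fin q, Fin.init b k = b (Fin.last q) := by
      rw [show (∑ k : Fin q, Fin.init b k) = ∑ k : Fin q, b k.castSucc from rfl, ← hb,
        Fin.sum_univ_castSucc]
      ring
    show Fin.snoc (Fin.init b) (c - ∑ k, Fin.init b k) = b
    rw [h2, Fin.snoc_init_self]
  · intro a _
    exact Fin.init_snoc _ _

lemma count_sum_eq' (p : ℕ) (hp : 1 ≤ p) (c : ZMod 2) :
    (Finset.univ.filter (fun b : Fin p → ZMod 2 => ∑ k, b k = c)).card = 2 ^ (p - 1) := by
  obtain ⟨q, rfl⟩ : ∃ q, p = q + 1 := ⟨p - 1, by omega⟩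
  exact count_sum_eq q c

/- ## Main theorem -/

open scoped Classical in
theorem hamming_S2_count (m : ℕ) (hm : 3 ≤ m) :
    (univ.filter (fun x : Fin (2 ^ m - 1) → ZMod 2 =>
      (∀ j : Fin m,
        ∑ i, x i * (if Nat.testBit ((i : ℕ) + 1) (j : ℕ) then (1 : ZMod 2) else 0) = 0)
      ∧ inS2 x)).card = 2 ^ ((2 ^ m - 1) / 2 - 1) := by
  classical
  obtain ⟨p, hp⟩ : ∃ p, p = 2 ^ (m - 1) - 1 := ⟨_, rfl⟩
  have h2m : (2 : ℕ) ^ m = 2 * 2 ^ (m - 1) := by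
    conv_lhs => rw [show m = (m - 1) + 1 by omega]
    ring
  have hpow : (4 : ℕ) ≤ 2 ^ (m - 1) := by
    calc (4 : ℕ) = 2 ^ 2 := by norm_num
    _ ≤ 2 ^ (m - 1) := Nat.pow_le_pow_right (by norm_num) (by omega)
  have hn : 2 ^ m - 1 = 2 * p + 1 := by omega
  rw [show (2 ^ m - 1) / 2 - 1 = p - 1 by omega,
    ← count_sum_eq' p (by omega) ((p : ℕ) : ZMod 2)]
  apply Finset.card_nbij'
    (fun x : Fin (2 ^ m - 1) → ZMod 2 => fun k : Fin p => x ⟨2 * (k : ℕ) + 1, by omega⟩)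
    (fun b : Fin p → ZMod 2 => fun i : Fin (2 ^ m - 1) => hphi b (i : ℕ))
  · -- forward membership
    intro x hx
    simp only [Finset.mem_coe, Finset.mem_filter, Finset.mem_univ, true_and] at hx ⊢
    obtain ⟨hchecks, hS2⟩ := hx
    have hs := structP_of_inS2 x hS2
    have hxeq : x = fun i : Fin (2 ^ m - 1) =>
        hphi (fun k : Fin p => x ⟨2 * (k : ℕ) + 1, by omega⟩) (i : ℕ) := by
      funext i
      have h := eq_hphi_of_structP hn x hs (i : ℕ) i.isLt
      calc x i = x ⟨(i : ℕ), i.isLt⟩ := by rw [Fin.eta]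
      _ = _ := h
    have hcheck0 : (∑ i : Fin (2 ^ m - 1),
        hphi (fun k : Fin p => x ⟨2 * (k : ℕ) + 1, by omega⟩) (i : ℕ) *
          (if Nat.testBit ((i : ℕ) + 1) 0 then (1 : ZMod 2) else 0)) = 0 := by
      have h0 := hchecks ⟨0, by omega⟩
      rw [hxeq] at h0
      exact h0
    have hch := check_hphi m p hm hp (fun k : Fin p => x ⟨2 * (k : ℕ) + 1, by omega⟩) 0
      (by omega)
    rw [if_pos rfl] at hch
    rw [hch] at hcheck0
    exact zmod2_eq_of_add _ _ hcheck0
  · -- backward membership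
    intro b hb
    simp only [Finset.mem_coe, Finset.mem_filter, Finset.mem_univ, true_and] at hb ⊢
    constructor
    · intro j
      have hch := check_hphi m p hm hp b (j : ℕ) j.isLt
      rcases Nat.eq_zero_or_pos (j : ℕ) with hj0 | hj0
      · rw [hj0] at hch ⊢
        rw [if_pos rfl] at hch
        rw [hch, hb]
        exact zmod2_add_self _
      · rw [if_neg (by omega)] at hch
        rw [hch]
    · exact inS2_of_structP _ (structP_hphi hn b)
  · -- left inverse
    intro x hx
    simp only [Finset.mem_coe, Finset.mem_filter, Finset.mem_univ, true_and] at hx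
    have hs := structP_of_inS2 x hx.2
    funext i
    have h := eq_hphi_of_structP hn x hs (i : ℕ) i.isLt
    calc hphi (fun k : Fin p => x ⟨2 * (k : ℕ) + 1, by omega⟩) (i : ℕ)
        = x ⟨(i : ℕ), i.isLt⟩ := h.symm
    _ = x i := by rw [Fin.eta]
  · -- right inverse
    intro b _
    funext k
    show hphi b (2 * (k : ℕ) + 1) = b k
    rw [hphi_odd, hbb_lt b (k : ℕ) k.isLt, Fin.eta]
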